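/- Let D₁ = αβδk₄κθλ' + αβδτθφλ' + βδk₃k₄k₅λθ − αβk₄κθλ' − αβτθφλ' − βk₃k₄k₅λθ + k₁k₂k₃k₄k₅μ and ℓ₂ = ((κθβαλ' + k₃k₅(βλθ − k₁k₂μ))k₄ + αβτθφλ')/(((ακλ' + k₃k₅λ)k₄ + φλ'τα)βθ). Then D₁ = 0 if and only if δ = ℓ₂. Moreover, if D₁ ≠ 0 and ℓ₁ := μ(αβk₄κθλ' + αβτθφλ' + βk₃k₄k₅λθ − k₁k₂k₃k₄k₅μ)/D₁ satisfies ℓ₁ ≠ −μ, then R₀ evaluated at u₁ = ℓ₁ and u₂ = 0 equals 1, where R₀ = θβk₆(μ(1−u₂)+(1−δ)u₁)/(k₁k₂μ). -/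

import Mathlib

open Real Filter Polynomial Matrix

theorem stmt19
    (lam lam' mu mu' beta alpha theta gamma phi kappa tau : ℝ)
    (delta u1 u2 u3 u4 u5 : ℝ)
    (hlam : 0 < lam) (hlam' : 0 < lam') (hmu : 0 < mu) (hmu' : 0 < mu')
    (hbeta : 0 < beta) (halpha : 0 < alpha) (htheta : 0 < theta)
    (hgamma : 0 < gamma) (hphi : 0 < phi) (hkappa : 0 < kappa) (htau : 0 < tau)
    (hu3 : u3 ∈ Set.Icc (0:ℝ) 1) (hu4 : u4 ∈ Set.Icc (0:ℝ) 1)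
    (hu5 : u5 ∈ Set.Icc (0:ℝ) 1)
    (k1 k2 k3 k4 k5 : ℝ)
    (hk1 : k1 = theta + u3 + mu) (hk2 : k2 = gamma + u4 + u5 + mu + mu')
    (hk3 : k3 = kappa + tau + mu) (hk4 : k4 = phi + mu + mu') (hk5 : k5 = mu + alpha)
    (R0 : ℝ → ℝ → ℝ → ℝ)
    (hR0 : ∀ d v w : ℝ, R0 d v w =
      theta * beta * (lam / (v + mu) + alpha * lam' * kappa / ((v + mu) * k3 * k5)
        + alpha * lam' * phi * tau / ((v + mu) * k3 * k4 * k5))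
      * (mu * (1 - w) + (1 - d) * v) / (k1 * k2 * mu))
    (l2 : ℝ)
    (hl2 : l2 = ((kappa * theta * beta * alpha * lam' + k3 * k5 * (beta * lam * theta - k1 * k2 * mu)) * k4
      + alpha * beta * tau * theta * phi * lam')
      / (((alpha * kappa * lam' + k3 * k5 * lam) * k4 + phi * lam' * tau * alpha) * beta * theta))
    (D1 : ℝ)
    (hD1 : D1 = alpha * beta * delta * k4 * kappa * theta * lam'
      + alpha * beta * delta * tau * theta * phi * lam' + beta * delta * k3 * k4 * k5 * lam * theta
      - alpha * beta * k4 * kappa * theta * lam' - alpha * beta * tau * theta * phi * lam'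
      - beta * k3 * k4 * k5 * lam * theta + k1 * k2 * k3 * k4 * k5 * mu)
    (l1 : ℝ)
    (hl1 : l1 = mu * (alpha * beta * k4 * kappa * theta * lam' + alpha * beta * tau * theta * phi * lam'
      + beta * k3 * k4 * k5 * lam * theta - k1 * k2 * k3 * k4 * k5 * mu) / D1) :
    (D1 = 0 ↔ delta = l2) ∧
    (D1 ≠ 0 → l1 ≠ -mu → R0 delta l1 0 = 1) := by
  obtain ⟨hu30, hu31⟩ := hu3
  obtain ⟨hu40, hu41⟩ := hu4
  obtain ⟨hu50, hu51⟩ := hu5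
  have hk1p : 0 < k1 := by rw [hk1]; linarith
  have hk2p : 0 < k2 := by rw [hk2]; linarith
  have hk3p : 0 < k3 := by rw [hk3]; linarith
  have hk4p : 0 < k4 := by rw [hk4]; linarith
  have hk5p : 0 < k5 := by rw [hk5]; linarith
  set E : ℝ := alpha * beta * k4 * kappa * theta * lam' + alpha * beta * tau * theta * phi * lam'
      + beta * k3 * k4 * k5 * lam * theta with hE
  have hEp : 0 < E := by positivity
  set K : ℝ := k1 * k2 * k3 * k4 * k5 * mu with hK
  have hKp : 0 < K := by positivity
  have hD1' : D1 = E * (delta - 1) + K := by rw [hD1]; ring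
  have hl2' : l2 = (E - K) / E := by
    rw [hl2, div_eq_div_iff (by positivity) hEp.ne']
    rw [hE, hK]; ring
  constructor
  · rw [hD1', hl2']
    constructor
    · intro h
      rw [eq_div_iff hEp.ne']
      linear_combination h
    · intro h
      have hd : delta * E = E - K := by
        rw [h]; field_simp
      linear_combination hd
  · intro hD1ne hl1ne
    have hkey : l1 * D1 = mu * (E - K) := by
      rw [hl1, div_mul_cancel₀ _ hD1ne]
    have hl1mune : l1 + mu ≠ 0 := fun h => hl1ne (by linarith)
    have h2 : (l1 + mu) * D1 = mu * E * delta := by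
      linear_combination hkey + mu * hD1'
    have hmain : E * (mu + (1 - delta) * l1) = K * (l1 + mu) := by
      have h1 : D1 * (E * (mu + (1 - delta) * l1)) = D1 * (K * (l1 + mu)) := by
        linear_combination E * (1 - delta) * hkey - K * h2 + E * mu * hD1'
      exact mul_left_cancel₀ hD1ne h1
    rw [hR0]
    have hsum : lam / (l1 + mu) + alpha * lam' * kappa / ((l1 + mu) * k3 * k5)
        + alpha * lam' * phi * tau / ((l1 + mu) * k3 * k4 * k5)
        = E / (beta * theta * ((l1 + mu) * k3 * k4 * k5)) := by
      rw [hE]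
      field_simp
      ring
    rw [hsum, div_eq_one_iff_eq (by positivity)]
    rw [hK] at hmain
    field_simp
    linear_combination hmain
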